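/- Let k be an algebraically closed field, U and W finite-dimensional k-vector spaces, and ρ: U ⊗ O_{P^n} → W ⊗ O_{P^n}(1) a morphism of sheaves on P^n that is not injective. Then for every integer m ≥ (dim U − 1)·n, the twisted kernel ker(ρ)(m) has a nonzero global section, H⁰(ker(ρ)(m)) ≠ 0. -/

import Mathlib

open TensorProduct MvPolynomial

section HeinPloogAux





/-- determinant of a matrix whose `i`-th row has homogeneous entries of degree `d i`. -/
lemma isHomogeneous_det_aux {σ R : Type*} [CommRing R] {s : ℕ}
    (M : Matrix (Fin s) (Fin s) (MvPolynomial σ R)) (d : Fin s → ℕ)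
    (h : ∀ i j, (M i j).IsHomogeneous (d i)) :
    M.det.IsHomogeneous (∑ i, d i) := by
  rw [Matrix.det_apply']
  apply IsHomogeneous.sum
  intro τ _
  have h1 : (∏ i, M (τ i) i).IsHomogeneous (∑ i, d (τ i)) :=
    IsHomogeneous.prod _ _ _ (fun i _ => h (τ i) i)
  have h2 : (∑ i, d (τ i)) = ∑ i, d i := Equiv.sum_comp τ d
  rw [h2] at h1
  have h3 : ((Equiv.Perm.sign τ : ℤ) : MvPolynomial σ R) = C ((Equiv.Perm.sign τ : ℤ) : R) := by
    simp
  have h4 : ((Equiv.Perm.sign τ : ℤ) : MvPolynomial σ R) * ∏ i, M (τ i) i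
      = C ((Equiv.Perm.sign τ : ℤ) : R) * ∏ i, M (τ i) i := by rw [h3]
  rw [h4]
  have := (isHomogeneous_C (σ := σ) ((Equiv.Perm.sign τ : ℤ) : R)).mul h1
  rwa [zero_add] at this



lemma dual_as_sum {F : Type*} [Field F] {s : ℕ} (f : Module.Dual F (Fin s → F))
    (x : Fin s → F) : f x = ∑ j, x j * f (Pi.single j 1) := by
  have hx : x = ∑ j, x j • (Pi.single j (1 : F) : Fin s → F) := by
    funext i
    simp [Finset.sum_apply, Pi.single_apply]
  conv_lhs => rw [hx]
  rw [map_sum]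
  simp [smul_eq_mul]

/-- Row selection: if the columns of `B` are linearly independent, there is a choice of rows
making an invertible square submatrix. -/
lemma exists_det_submatrix_ne_zero {F : Type*} [Field F] {ι : Type*} [Fintype ι]
    [DecidableEq ι] {s : ℕ} (B : Matrix ι (Fin s) F)
    (hB : ∀ v : Fin s → F, B.mulVec v = 0 → v = 0) :
    ∃ e : Fin s → ι, (B.submatrix e id).det ≠ 0 := by
  classical
  -- rows span everything
  have hspan : Submodule.span F (Set.range fun t => B t) = ⊤ := by
    by_contra h
    have hlt : Submodule.span F (Set.range fun t => B t) < ⊤ := lt_top_iff_ne_top.2 h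
    obtain ⟨f, hf0, hfmap⟩ :=
      Submodule.exists_dual_map_eq_bot_of_lt_top hlt inferInstance
    set v : Fin s → F := fun j => f (Pi.single j 1) with hv
    have hker : ∀ x ∈ Submodule.span F (Set.range fun t => B t), f x = 0 := by
      intro x hx
      have : f x ∈ (Submodule.span F (Set.range fun t => B t)).map f :=
        Submodule.mem_map_of_mem hx
      rw [hfmap] at this
      exact (Submodule.mem_bot F).1 this
    have hmv : B.mulVec v = 0 := by
      funext t
      have : f (B t) = 0 := hker _ (Submodule.subset_span ⟨t, rfl⟩)
      rw [dual_as_sum] at this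
      simpa [Matrix.mulVec, dotProduct, hv] using this
    have hv0 : v = 0 := hB v hmv
    refine hf0 (LinearMap.ext fun x => ?_)
    rw [dual_as_sum]
    have : ∀ j, f (Pi.single j 1) = 0 := fun j => congrFun hv0 j
    simp [this]
  obtain ⟨bset, hsub, hspanb, hind⟩ :=
    exists_linearIndependent F (Set.range fun t => B t)
  rw [hspan] at hspanb
  let bas : Module.Basis bset F (Fin s → F) :=
    Module.Basis.mk hind (by rw [Subtype.range_coe, hspanb])
  haveI : Fintype bset := FiniteDimensional.fintypeBasisIndex bas
  have hcard : Fintype.card bset = s := by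
    have h1 := Module.finrank_eq_card_basis bas
    rw [Module.finrank_pi, Fintype.card_fin] at h1
    omega
  let eqv : Fin s ≃ bset := (Fintype.equivFinOfCardEq hcard).symm
  have hch : ∀ a : Fin s, ∃ t : ι, B t = (eqv a : Fin s → F) := fun a => hsub (eqv a).2
  choose e he using hch
  refine ⟨e, ?_⟩
  have hrows : LinearIndependent F (fun a : Fin s => B (e a)) := by
    have : (fun a : Fin s => B (e a)) = (fun y : bset => (y : Fin s → F)) ∘ eqv := by
      funext a; exact he a
    rw [this]
    exact hind.comp eqv eqv.injective
  intro hdet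
  have hdet' : ((B.submatrix e id).transpose).det = 0 := by rw [Matrix.det_transpose]; exact hdet
  obtain ⟨v, hv0, hmv⟩ := Matrix.exists_mulVec_eq_zero_iff.2 hdet'
  refine hv0 (funext fun a => ?_)
  refine Fintype.linearIndependent_iff.1 hrows v ?_ a
  funext j
  have := congrFun hmv j
  simpa [Matrix.mulVec, dotProduct, Matrix.submatrix, Finset.sum_apply, mul_comm]
    using this

variable {k : Type} [Field k] {σ : Type} {r : ℕ} {ι : Type} [Fintype ι] [DecidableEq ι]

lemma exists_homogeneous_kernel_vec
    (P : Matrix ι (Fin r) (MvPolynomial σ k))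
    (hP : ∀ t j, (P t j).IsHomogeneous 1)
    (p : Fin r → MvPolynomial σ k) (hp : p ≠ 0) (hker : P.mulVec p = 0) :
    ∃ d, d ≤ r - 1 ∧ ∃ q : Fin r → MvPolynomial σ k,
      q ≠ 0 ∧ P.mulVec q = 0 ∧ ∀ j, (q j).IsHomogeneous d := by
  classical
  -- a kernel vector of minimal support
  let Q : ℕ → Prop := fun t => ∃ c : Fin r → MvPolynomial σ k, c ≠ 0 ∧ P.mulVec c = 0 ∧
      (Finset.univ.filter fun j => c j ≠ 0).card = t
  have hQ : ∃ t, Q t := ⟨_, p, hp, hker, rfl⟩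
  obtain ⟨c, hc0, hcker, hccard⟩ := Nat.find_spec hQ
  have hmin : ∀ β : Fin r → MvPolynomial σ k, β ≠ 0 → P.mulVec β = 0 →
      Nat.find hQ ≤ (Finset.univ.filter fun j => β j ≠ 0).card :=
    fun β h1 h2 => Nat.find_min' hQ ⟨β, h1, h2, rfl⟩
  set T : Finset (Fin r) := Finset.univ.filter fun j => c j ≠ 0 with hT
  have hTne : T.Nonempty := by
    rcases Function.ne_iff.1 hc0 with ⟨j, hj⟩
    exact ⟨j, by simp [hT]; exact hj⟩
  obtain ⟨j₀, hj₀⟩ := hTne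
  have hcj₀ : c j₀ ≠ 0 := by
    have := hj₀; rw [hT, Finset.mem_filter] at this; exact this.2
  set T' : Finset (Fin r) := T.erase j₀ with hT'
  set s := T'.card with hs
  have hj₀T' : j₀ ∉ T' := Finset.notMem_erase j₀ T
  have hsT : s = T.card - 1 := by rw [hs, hT', Finset.card_erase_of_mem hj₀]
  have hT1 : 1 ≤ T.card := Finset.card_pos.2 ⟨j₀, hj₀⟩
  have hsr : s ≤ r - 1 := by
    have h1 : T.card ≤ r := by simpa using T.card_le_univ
    omega
  let g : Fin s ≃o {y // y ∈ T'} := T'.orderIsoOfFin rfl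
  -- sums over supported vectors
  have hsum : ∀ (t : ι) (β : Fin r → MvPolynomial σ k), (∀ j ∉ T', β j = 0) →
      (P.mulVec β) t = ∑ a : Fin s, P t (g a : Fin r) * β (g a : Fin r) := by
    intro t β hβ
    have h1 : (P.mulVec β) t = ∑ j ∈ T', P t j * β j := by
      simp only [Matrix.mulVec, dotProduct]
      exact (Finset.sum_subset T'.subset_univ
        (fun j _ hj => by rw [hβ j hj, mul_zero])).symm
    rw [h1, ← Finset.sum_coe_sort T' (fun j => P t j * β j)]
    exact (Equiv.sum_comp g.toEquiv
      (fun y : {y // y ∈ T'} => P t (y : Fin r) * β (y : Fin r))).symm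
  -- the chosen columns are linearly independent over S
  have hBsInj : ∀ w : Fin s → MvPolynomial σ k, (∀ t, ∑ a, P t (g a : Fin r) * w a = 0) → w = 0 := by
    intro w hw
    by_contra hw0
    set β : Fin r → MvPolynomial σ k := fun j => if h : j ∈ T' then w (g.symm ⟨j, h⟩) else 0 with hβ
    have hβsupp : ∀ j ∉ T', β j = 0 := fun j hj => dif_neg hj
    have hβg : ∀ a, β (g a : Fin r) = w a := by
      intro a
      rw [hβ]
      simp only [dif_pos (g a).2]
      congr 1
      rw [Subtype.coe_eta, OrderIso.symm_apply_apply]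
    have hβker : P.mulVec β = 0 := by
      funext t
      rw [hsum t β hβsupp]
      simp only [hβg]
      exact hw t
    have hβ0 : β ≠ 0 := by
      rcases Function.ne_iff.1 hw0 with ⟨a, ha⟩
      exact Function.ne_iff.2 ⟨g a, by rw [hβg]; exact ha⟩
    have h1 := hmin β hβ0 hβker
    have h2 : (Finset.univ.filter fun j => β j ≠ 0).card ≤ s := by
      rw [hs]
      apply Finset.card_le_card
      intro j hj
      rw [Finset.mem_filter] at hj
      by_contra hjT
      exact hj.2 (hβsupp j hjT)
    omega
  -- pass to the fraction field and select rows
  set F := FractionRing (MvPolynomial σ k) with hF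
  set φ : MvPolynomial σ k →+* F := algebraMap (MvPolynomial σ k) F with hφ
  have hφinj : Function.Injective φ := IsFractionRing.injective (MvPolynomial σ k) F
  have hBFInj : ∀ v : Fin s → F, (∀ t, ∑ a, φ (P t (g a : Fin r)) * v a = 0) → v = 0 := by
    intro v hv
    obtain ⟨b, hb⟩ := IsLocalization.exist_integer_multiples (nonZeroDivisors (MvPolynomial σ k)) Finset.univ v
    choose w hw using fun a => hb a (Finset.mem_univ a)
    have hwker : ∀ t, ∑ a, P t (g a : Fin r) * w a = 0 := by
      intro t
      apply hφinj
      rw [map_sum, map_zero]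
      calc ∑ a, φ (P t (g a : Fin r) * w a)
          = ∑ a, φ (P t (g a : Fin r)) * ((b : MvPolynomial σ k) • v a) := by
            apply Finset.sum_congr rfl; intro a _; rw [map_mul, hw a]
        _ = (b : MvPolynomial σ k) • ∑ a, φ (P t (g a : Fin r)) * v a := by
            rw [Finset.smul_sum]; apply Finset.sum_congr rfl; intro a _
            rw [Algebra.smul_def, Algebra.smul_def]; ring
        _ = 0 := by rw [hv t, smul_zero]
    have hw0 : w = 0 := hBsInj w hwker
    funext a
    have h1 : φ (w a) = (b : MvPolynomial σ k) • v a := hw a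
    rw [hw0, Pi.zero_apply, map_zero] at h1
    have h2 : (b : MvPolynomial σ k) • v a = 0 := h1.symm
    rw [Algebra.smul_def] at h2
    rcases mul_eq_zero.1 h2 with h | h
    · exact absurd h (by
        intro hh
        exact nonZeroDivisors.ne_zero b.2 (hφinj (show φ (b : MvPolynomial σ k) = φ 0 by
          rw [map_zero]; exact hh)))
    · exact h
  obtain ⟨e, hdet⟩ := exists_det_submatrix_ne_zero
      (B := fun t a => φ (P t (g a : Fin r))) (by
        intro v hv
        apply hBFInj
        intro t
        have := congrFun hv t
        simpa [Matrix.mulVec, dotProduct] using this)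
  set M : Matrix (Fin s) (Fin s) (MvPolynomial σ k) := fun a b' => P (e a) (g b' : Fin r) with hM
  have hMdet : M.det ≠ 0 := by
    intro h
    apply hdet
    have h1 : (Matrix.of fun t a => φ (P t (g a : Fin r))).submatrix e id = M.map φ := rfl
    show ((Matrix.of fun t a => φ (P t (g a : Fin r))).submatrix e id).det = 0
    rw [h1, ← RingHom.mapMatrix_apply, ← RingHom.map_det, h, map_zero]
  set x : Fin s → MvPolynomial σ k := (M.adjugate).mulVec (fun a => - P (e a) j₀) with hx
  set q : Fin r → MvPolynomial σ k := fun j => if h : j ∈ T' then x (g.symm ⟨j, h⟩)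
      else if j = j₀ then M.det else 0 with hq
  have hqj₀ : q j₀ = M.det := by
    show (if h : j₀ ∈ T' then x (g.symm ⟨j₀, h⟩) else if j₀ = j₀ then M.det else 0) = M.det
    rw [dif_neg hj₀T', if_pos rfl]
  have hqg : ∀ a, q (g a : Fin r) = x a := by
    intro a
    show (if h : (g a : Fin r) ∈ T' then x (g.symm ⟨(g a : Fin r), h⟩) else _) = x a
    rw [dif_pos (g a).2]
    congr 1
    rw [Subtype.coe_eta, OrderIso.symm_apply_apply]
  have hqsupp : ∀ j, j ∉ T' → j ≠ j₀ → q j = 0 := by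
    intro j h1 h2
    show (if h : j ∈ T' then x (g.symm ⟨j, h⟩) else if j = j₀ then M.det else 0) = 0
    rw [dif_neg h1, if_neg h2]
  have hq0 : q ≠ 0 := Function.ne_iff.2 ⟨j₀, by rw [hqj₀]; exact hMdet⟩
  -- the rows selected by e vanish on q
  have hrow : ∀ a : Fin s, (P.mulVec q) (e a) = 0 := by
    intro a
    have h1 : (P.mulVec q) (e a) = ∑ j ∈ insert j₀ T', P (e a) j * q j := by
      simp only [Matrix.mulVec, dotProduct]
      refine (Finset.sum_subset (Finset.subset_univ _) ?_).symm
      intro j _ hj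
      rw [hqsupp j (fun h => hj (Finset.mem_insert_of_mem h))
        (fun h => hj (h ▸ Finset.mem_insert_self _ _)), mul_zero]
    have h2 : ∑ j ∈ T', P (e a) j * q j = ∑ b', M a b' * x b' := by
      rw [← Finset.sum_coe_sort T' (fun j => P (e a) j * q j)]
      rw [← Equiv.sum_comp g.toEquiv
        (fun y : {y // y ∈ T'} => P (e a) (y : Fin r) * q (y : Fin r))]
      apply Finset.sum_congr rfl
      intro b' _
      show P (e a) (g b' : Fin r) * q (g b' : Fin r) = M a b' * x b'
      rw [hqg b']
    have h3 : ∑ b', M a b' * x b' = (M.mulVec x) a := rfl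
    have h4 : M.mulVec x = fun a => M.det * (- P (e a) j₀) := by
      rw [hx, Matrix.mulVec_mulVec, Matrix.mul_adjugate, Matrix.smul_mulVec,
        Matrix.one_mulVec]
      funext a'
      simp [smul_eq_mul]
    rw [h1, Finset.sum_insert hj₀T', hqj₀, h2, h3, h4]
    ring
  -- q is in the kernel everywhere
  have hqker : P.mulVec q = 0 := by
    set q'' : Fin r → MvPolynomial σ k := fun j => c j₀ * q j - q j₀ * c j with hq''
    have hq''supp : ∀ j ∉ T', q'' j = 0 := by
      intro j hj
      by_cases hjj : j = j₀
      · show c j₀ * q j - q j₀ * c j = 0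
        rw [hjj]
        ring
      · have hcj : c j = 0 := by
          by_contra hcj
          have hjT : j ∈ T := by rw [hT, Finset.mem_filter]; exact ⟨Finset.mem_univ _, hcj⟩
          exact hj (Finset.mem_erase.2 ⟨hjj, hjT⟩)
        show c j₀ * q j - q j₀ * c j = 0
        rw [hqsupp j hj hjj, hcj]
        ring
    have hq''row : ∀ a, ∑ b', M a b' * q'' (g b' : Fin r) = 0 := by
      intro a
      have h1 : (P.mulVec q'') (e a) =
          c j₀ * (P.mulVec q) (e a) - q j₀ * (P.mulVec c) (e a) := by
        simp only [Matrix.mulVec, dotProduct, hq'', Finset.mul_sum,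
          ← Finset.sum_sub_distrib]
        apply Finset.sum_congr rfl
        intro j _
        ring
      have h2 : (P.mulVec q'') (e a) = ∑ b', M a b' * q'' (g b' : Fin r) := by
        rw [hsum (e a) q'' hq''supp]
        try rfl
      rw [← h2, h1, hrow a, hcker]
      try simp
    have hw''0 : (fun b' => q'' (g b' : Fin r)) = 0 := by
      by_contra hw
      apply hMdet
      apply Matrix.exists_mulVec_eq_zero_iff.1
      refine ⟨_, hw, ?_⟩
      funext a
      simp only [Matrix.mulVec, dotProduct]
      exact hq''row a
    have hprop : ∀ j, c j₀ * q j = q j₀ * c j := by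
      intro j
      by_cases hj : j ∈ T'
      · have h1 := congrFun hw''0 (g.symm ⟨j, hj⟩)
        rw [OrderIso.apply_symm_apply] at h1
        have h2 : q'' j = 0 := h1
        exact sub_eq_zero.1 h2
      · exact sub_eq_zero.1 (hq''supp j hj)
    funext t
    have h2 : c j₀ * (P.mulVec q) t = q j₀ * (P.mulVec c) t := by
      simp only [Matrix.mulVec, dotProduct, Finset.mul_sum]
      apply Finset.sum_congr rfl
      intro j _
      rw [mul_left_comm, hprop j, mul_left_comm]
    rw [hcker] at h2
    simp only [Pi.zero_apply, mul_zero] at h2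
    rcases mul_eq_zero.1 h2 with h | h
    · exact absurd h hcj₀
    · exact h
  -- homogeneity of degree s
  have hdeg : ∀ j, (q j).IsHomogeneous s := by
    have hdetM : M.det.IsHomogeneous s := by
      have := isHomogeneous_det_aux M (fun _ => 1) (fun i j => hP (e i) (g j : Fin r))
      simpa using this
    intro j
    by_cases hj : j ∈ T'
    · have hs1 : 1 ≤ s := by
        rw [hs]; exact Finset.card_pos.2 ⟨j, hj⟩
      show ((if h : j ∈ T' then x (g.symm ⟨j, h⟩) else if j = j₀ then M.det else 0)).IsHomogeneous s
      rw [dif_pos hj]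
      show (((M.adjugate).mulVec (fun a => - P (e a) j₀)) _).IsHomogeneous s
      set a := g.symm ⟨j, hj⟩
      simp only [Matrix.mulVec, dotProduct]
      apply IsHomogeneous.sum
      intro b' _
      have hadj : (M.adjugate a b').IsHomogeneous (s - 1) := by
        rw [Matrix.adjugate_apply]
        have hupd : ∀ i jx, ((M.updateRow b' (Pi.single a 1)) i jx).IsHomogeneous
            (if i = b' then 0 else 1) := by
          intro i jx
          by_cases hib : i = b'
          · subst hib
            rw [Matrix.updateRow_self, if_pos rfl, Pi.single_apply]
            by_cases hja : jx = a
            · rw [if_pos hja]; exact isHomogeneous_one _ _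
            · rw [if_neg hja]; exact isHomogeneous_zero _ _ _
          · rw [Matrix.updateRow_ne hib, if_neg hib]
            exact hP _ _
        have := isHomogeneous_det_aux _ _ hupd
        have hsum' : ∑ i : Fin s, (if i = b' then 0 else 1) = s - 1 := by
          rw [Finset.sum_ite, Finset.sum_const, Finset.sum_const]
          simp [Finset.filter_ne', Finset.card_erase_of_mem]
        rwa [hsum'] at this
      have := hadj.mul ((hP (e b') j₀).neg)
      rwa [show s - 1 + 1 = s by omega] at this
    · by_cases hjj : j = j₀
      · subst hjj; rw [hqj₀]; exact hdetM
      · rw [hqsupp j hj hjj]; exact isHomogeneous_zero _ _ _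
  exact ⟨s, hsr, q, hq0, hqker, hdeg⟩



lemma fin_one_homog {k : Type} [Field k] {p : MvPolynomial (Fin 1) k} {s : ℕ}
    (h : p.IsHomogeneous s) :
    p = C (coeff (Finsupp.single 0 s) p) * X 0 ^ s := by
  rw [C_mul_X_pow_eq_monomial]
  apply MvPolynomial.ext
  intro d
  rw [coeff_monomial]
  by_cases hd : d = Finsupp.single 0 s
  · rw [if_pos hd.symm, hd]
  · rw [if_neg (fun hh => hd hh.symm)]
    apply h.coeff_eq_zero
    intro hdeg
    apply hd
    have hdd : d = Finsupp.single 0 (d 0) := by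
      apply Finsupp.ext
      intro i
      have hi : i = 0 := Subsingleton.elim i 0
      rw [hi, Finsupp.single_eq_same]
    have hdeg0 : d.degree = d 0 := by
      have h1 : d.degree = ∑ i : Fin 1, d i := by
        rw [Finsupp.degree]
        apply Finset.sum_subset (Finset.subset_univ _)
        intro i _ hi
        exact Finsupp.notMem_support_iff.1 hi
      rw [h1, Fin.sum_univ_one]
    rw [hdd, ← hdeg, hdeg0]


end HeinPloogAux

/-- Lemma 13 of Hein–Ploog: Let U, W be finite-dimensional vector spaces
over an algebraically closed field k and ρ : U ⊗ O_{P^n} → W ⊗ O_{P^n}(1) a morphism of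
sheaves on P^n (given by the linear map ρ : U → W^{n+1} whose components are the
coefficients of the linear forms; ρhat is the induced map on U ⊗ k[x₀,…,x_n]).
If ρ is not injective, then for every m ≥ (dim U − 1)·n the twisted kernel ker(ρ)(m)
has a nonzero global section, i.e. there is a nonzero element of U ⊗ k[x]_m killed by ρhat. -/
theorem stmt4 (k : Type) [Field k] [IsAlgClosed k] (n : ℕ)
    (U W : Type) [AddCommGroup U] [Module k U] [FiniteDimensional k U]
    [AddCommGroup W] [Module k W] [FiniteDimensional k W]
    (ρ : U →ₗ[k] (Fin (n + 1) → W))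
    (ρhat : (U ⊗[k] MvPolynomial (Fin (n + 1)) k) →ₗ[k]
      (W ⊗[k] MvPolynomial (Fin (n + 1)) k))
    (hρhat : ρhat = ∑ i : Fin (n + 1),
      TensorProduct.map ((LinearMap.proj i).comp ρ)
        (LinearMap.mulLeft k (X i : MvPolynomial (Fin (n + 1)) k)))
    (hnotinj : ¬ Function.Injective ρhat)
    (m : ℕ) (hm : (Module.finrank k U - 1) * n ≤ m) :
    ∃ f ∈ LinearMap.range (TensorProduct.map (LinearMap.id : U →ₗ[k] U)
        ((MvPolynomial.homogeneousSubmodule (Fin (n + 1)) k m).subtype)),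
      f ≠ 0 ∧ ρhat f = 0 := by
  classical
  set r := Module.finrank k U with hr
  have hr1 : 1 ≤ r := by
    by_contra h
    have hr0 : Module.finrank k U = 0 := by omega
    haveI : Subsingleton U := Module.finrank_zero_iff.1 hr0
    apply hnotinj
    intro x y _
    have hall : ∀ z : U ⊗[k] MvPolynomial (Fin (n+1)) k, z = 0 := by
      intro z
      induction z using TensorProduct.induction_on with
      | zero => rfl
      | tmul u s => rw [Subsingleton.elim u 0, TensorProduct.zero_tmul]
      | add a b ha hb => rw [ha, hb, add_zero]
    rw [hall x, hall y]
  set w := Module.finrank k W with hw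
  let b : Module.Basis (Fin r) k U := Module.finBasis k U
  let cW : Module.Basis (Fin w) k W := Module.finBasis k W
  -- coordinate maps
  let coordU : Fin r → (U ⊗[k] MvPolynomial (Fin (n+1)) k) →ₗ[k] MvPolynomial (Fin (n+1)) k :=
    fun j => (TensorProduct.lid k _).toLinearMap ∘ₗ (TensorProduct.map (b.coord j) LinearMap.id)
  let coordW : Fin w → (W ⊗[k] MvPolynomial (Fin (n+1)) k) →ₗ[k] MvPolynomial (Fin (n+1)) k :=
    fun t => (TensorProduct.lid k _).toLinearMap ∘ₗ (TensorProduct.map (cW.coord t) LinearMap.id)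
  have hcoordU : ∀ (j) (u : U) (s : MvPolynomial (Fin (n+1)) k),
      coordU j (u ⊗ₜ[k] s) = b.repr u j • s := by
    intro j u s
    simp [coordU, TensorProduct.map_tmul, Module.Basis.coord_apply, TensorProduct.lid_tmul]
  have hcoordW : ∀ (t) (v : W) (s : MvPolynomial (Fin (n+1)) k),
      coordW t (v ⊗ₜ[k] s) = cW.repr v t • s := by
    intro t v s
    simp [coordW, TensorProduct.map_tmul, Module.Basis.coord_apply, TensorProduct.lid_tmul]
  have hsumU : ∀ f : U ⊗[k] MvPolynomial (Fin (n+1)) k,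
      ∑ j, b j ⊗ₜ[k] coordU j f = f := by
    intro f
    induction f using TensorProduct.induction_on with
    | zero => simp
    | tmul u s =>
      calc ∑ j, b j ⊗ₜ[k] coordU j (u ⊗ₜ[k] s)
          = ∑ j, b.repr u j • (b j ⊗ₜ[k] s) := by
            apply Finset.sum_congr rfl
            intro j _
            rw [hcoordU, TensorProduct.tmul_smul]
        _ = (∑ j, b.repr u j • b j) ⊗ₜ[k] s := by
            rw [TensorProduct.sum_tmul]
            apply Finset.sum_congr rfl
            intro j _
            rw [TensorProduct.smul_tmul']
        _ = u ⊗ₜ[k] s := by rw [b.sum_repr u]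
    | add f1 f2 h1 h2 =>
      simp only [map_add, TensorProduct.tmul_add, Finset.sum_add_distrib]
      rw [h1, h2]
  have hcoordU_sum : ∀ (y : Fin r → MvPolynomial (Fin (n+1)) k) (j : Fin r),
      coordU j (∑ j', b j' ⊗ₜ[k] y j') = y j := by
    intro y j
    rw [map_sum]
    calc ∑ j', coordU j (b j' ⊗ₜ[k] y j') = ∑ j', (b.repr (b j') j) • y j' := by
          apply Finset.sum_congr rfl
          intro j' _
          rw [hcoordU]
      _ = y j := by
          simp [Module.Basis.repr_self, Finsupp.single_apply, ite_smul, Finset.sum_ite_eq]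
  have hcoordW_sum : ∀ (y : Fin w → MvPolynomial (Fin (n+1)) k) (t : Fin w),
      coordW t (∑ t', cW t' ⊗ₜ[k] y t') = y t := by
    intro y t
    rw [map_sum]
    calc ∑ t', coordW t (cW t' ⊗ₜ[k] y t') = ∑ t', (cW.repr (cW t') t) • y t' := by
          apply Finset.sum_congr rfl
          intro t' _
          rw [hcoordW]
      _ = y t := by
          simp [Module.Basis.repr_self, Finsupp.single_apply, ite_smul, Finset.sum_ite_eq]
  -- the matrix of linear forms
  set P : Matrix (Fin w) (Fin r) (MvPolynomial (Fin (n+1)) k) :=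
    fun t j => ∑ i, C (cW.repr (ρ (b j) i) t) * X i with hPdef
  have hP : ∀ t j, (P t j).IsHomogeneous 1 := by
    intro t j
    apply IsHomogeneous.sum
    intro i _
    exact isHomogeneous_C_mul_X _ _
  -- key correspondence
  have hkey : ∀ p : Fin r → MvPolynomial (Fin (n+1)) k,
      ρhat (∑ j, b j ⊗ₜ[k] p j) = ∑ t, cW t ⊗ₜ[k] (P.mulVec p) t := by
    intro p
    rw [hρhat, LinearMap.sum_apply]
    have hL : ∀ i : Fin (n+1),
        (TensorProduct.map ((LinearMap.proj i).comp ρ) (LinearMap.mulLeft k (X i)))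
          (∑ j, b j ⊗ₜ[k] p j) = ∑ j, (ρ (b j) i) ⊗ₜ[k] (X i * p j) := by
      intro i
      rw [map_sum]
      apply Finset.sum_congr rfl
      intro j _
      rw [TensorProduct.map_tmul]
      rfl
    calc ∑ i, (TensorProduct.map ((LinearMap.proj i).comp ρ) (LinearMap.mulLeft k (X i)))
          (∑ j, b j ⊗ₜ[k] p j)
        = ∑ i, ∑ j, (ρ (b j) i) ⊗ₜ[k] (X i * p j) :=
          Finset.sum_congr rfl (fun i _ => hL i)
      _ = ∑ i, ∑ j, ∑ t, (cW.repr (ρ (b j) i) t) • (cW t ⊗ₜ[k] (X i * p j)) := by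
          apply Finset.sum_congr rfl
          intro i _
          apply Finset.sum_congr rfl
          intro j _
          conv_lhs => rw [← cW.sum_repr (ρ (b j) i)]
          rw [TensorProduct.sum_tmul]
          apply Finset.sum_congr rfl
          intro t _
          rw [TensorProduct.smul_tmul']
      _ = ∑ t, ∑ i, ∑ j, (cW.repr (ρ (b j) i) t) • (cW t ⊗ₜ[k] (X i * p j)) := by
          rw [show (∑ i, ∑ j, ∑ t, (cW.repr (ρ (b j) i) t) • (cW t ⊗ₜ[k] (X i * p j)))
              = ∑ i, ∑ t, ∑ j, (cW.repr (ρ (b j) i) t) • (cW t ⊗ₜ[k] (X i * p j)) from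
            Finset.sum_congr rfl (fun i _ => Finset.sum_comm)]
          exact Finset.sum_comm
      _ = ∑ t, cW t ⊗ₜ[k] (P.mulVec p) t := by
          apply Finset.sum_congr rfl
          intro t _
          have h1 : (P.mulVec p) t = ∑ i, ∑ j, (cW.repr (ρ (b j) i) t) • (X i * p j) := by
            simp only [Matrix.mulVec, dotProduct, hPdef]
            calc ∑ j, (∑ i, C (cW.repr (ρ (b j) i) t) * X i) * p j
                = ∑ j, ∑ i, (cW.repr (ρ (b j) i) t) • (X i * p j) := by
                  apply Finset.sum_congr rfl
                  intro j _
                  rw [Finset.sum_mul]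
                  apply Finset.sum_congr rfl
                  intro i _
                  rw [mul_assoc, ← smul_eq_C_mul]
              _ = ∑ i, ∑ j, (cW.repr (ρ (b j) i) t) • (X i * p j) := Finset.sum_comm
          rw [h1, TensorProduct.tmul_sum]
          apply Finset.sum_congr rfl
          intro i _
          rw [TensorProduct.tmul_sum]
          apply Finset.sum_congr rfl
          intro j _
          rw [TensorProduct.tmul_smul]
  -- get a nonzero kernel element of ρhat
  have hker_ne : ∃ f₀ : U ⊗[k] MvPolynomial (Fin (n+1)) k, f₀ ≠ 0 ∧ ρhat f₀ = 0 := by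
    by_contra h
    push_neg at h
    apply hnotinj
    rw [← LinearMap.ker_eq_bot]
    rw [Submodule.eq_bot_iff]
    intro f hf
    by_contra hf0
    exact h f hf0 (LinearMap.mem_ker.1 hf)
  obtain ⟨f₀, hf₀ne, hρf₀⟩ := hker_ne
  set p : Fin r → MvPolynomial (Fin (n+1)) k := fun j => coordU j f₀ with hpdef
  have hfp : ∑ j, b j ⊗ₜ[k] p j = f₀ := hsumU f₀
  have hp0 : p ≠ 0 := by
    intro h
    apply hf₀ne
    rw [← hfp, h]
    simp
  have h0 : ∑ t, cW t ⊗ₜ[k] (P.mulVec p) t = 0 := by rw [← hkey, hfp, hρf₀]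
  have hpker : P.mulVec p = 0 := by
    funext t
    have h1 := congrArg (coordW t) h0
    rw [map_zero] at h1
    rw [hcoordW_sum (fun t' => (P.mulVec p) t') t] at h1
    exact h1
  obtain ⟨d, hdle, q, hq0, hqker, hqdeg⟩ :=
    exists_homogeneous_kernel_vec P hP p hp0 hpker
  -- produce a kernel vector homogeneous of degree exactly m
  have hexq1 : ∃ q1 : Fin r → MvPolynomial (Fin (n+1)) k, q1 ≠ 0 ∧ P.mulVec q1 = 0 ∧
      ∀ j, (q1 j).IsHomogeneous m := by
    rcases Nat.eq_zero_or_pos n with hn | hn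
    · subst hn
      set α : Fin r → k := fun j => coeff (Finsupp.single 0 d) (q j) with hα
      have hqj : ∀ j, q j = C (α j) * X 0 ^ d := fun j => fin_one_homog (hqdeg j)
      have hXne : ∀ N : ℕ, (X 0 ^ N : MvPolynomial (Fin (0+1)) k) ≠ 0 :=
        fun N => pow_ne_zero _ (X_ne_zero _)
      refine ⟨fun j => C (α j) * X 0 ^ m, ?_, ?_, fun j => isHomogeneous_C_mul_X_pow _ _ _⟩
      · rcases Function.ne_iff.1 hq0 with ⟨j, hj⟩
        have hαj : α j ≠ 0 := by
          intro h
          apply hj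
          rw [hqj j, h, map_zero, zero_mul]
          rfl
        refine Function.ne_iff.2 ⟨j, ?_⟩
        exact mul_ne_zero (fun hC => hαj (by simpa using hC)) (hXne m)
      · have hsum0 : ∀ t, ∑ j, P t j * C (α j) = 0 := by
          intro t
          have h1 := congrFun hqker t
          simp only [Matrix.mulVec, dotProduct, Pi.zero_apply] at h1
          have h2 : (∑ j, P t j * C (α j)) * X 0 ^ d = 0 := by
            rw [Finset.sum_mul]
            rw [← h1]
            apply Finset.sum_congr rfl
            intro j _
            rw [hqj j]
            ring
          rcases mul_eq_zero.1 h2 with h | h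
          · exact h
          · exact absurd h (hXne d)
        funext t
        simp only [Matrix.mulVec, dotProduct, Pi.zero_apply]
        calc ∑ j, P t j * (C (α j) * X 0 ^ m)
            = (∑ j, P t j * C (α j)) * X 0 ^ m := by
              rw [Finset.sum_mul]
              apply Finset.sum_congr rfl
              intro j _
              ring
          _ = 0 := by rw [hsum0 t, zero_mul]
    · have hdm : d ≤ m := by
        have h1 : r - 1 ≤ (r - 1) * n := Nat.le_mul_of_pos_right _ hn
        omega
      refine ⟨fun j => q j * X 0 ^ (m - d), ?_, ?_, ?_⟩
      · rcases Function.ne_iff.1 hq0 with ⟨j, hj⟩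
        refine Function.ne_iff.2 ⟨j, ?_⟩
        exact mul_ne_zero hj (pow_ne_zero _ (X_ne_zero _))
      · funext t
        have h1 := congrFun hqker t
        simp only [Matrix.mulVec, dotProduct, Pi.zero_apply] at h1 ⊢
        calc ∑ j, P t j * (q j * X 0 ^ (m - d))
            = (∑ j, P t j * q j) * X 0 ^ (m - d) := by
              rw [Finset.sum_mul]
              apply Finset.sum_congr rfl
              intro j _
              ring
          _ = 0 := by rw [h1, zero_mul]
      · intro j
        have := (hqdeg j).mul (isHomogeneous_X_pow (R := k) (0 : Fin (n+1)) (m - d))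
        rwa [show d + (m - d) = m by omega] at this
  obtain ⟨q1, hq10, hq1ker, hq1deg⟩ := hexq1
  refine ⟨∑ j, b j ⊗ₜ[k] q1 j, ?_, ?_, ?_⟩
  · apply LinearMap.mem_range.2
    refine ⟨∑ j, b j ⊗ₜ[k] (⟨q1 j, hq1deg j⟩ :
      MvPolynomial.homogeneousSubmodule (Fin (n+1)) k m), ?_⟩
    rw [map_sum]
    apply Finset.sum_congr rfl
    intro j _
    rw [TensorProduct.map_tmul]
    rfl
  · intro h
    rcases Function.ne_iff.1 hq10 with ⟨j, hj⟩
    apply hj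
    have h2 := congrArg (coordU j) h
    rw [map_zero] at h2
    rw [hcoordU_sum (fun j' => q1 j') j] at h2
    exact h2
  · rw [hkey, hq1ker]
    simp
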